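/- For qubits, PM-simulable measurements coincide with the convex hull of two-outcome measurements: SP(2,n) = conv(P(2,n;2)), i.e. an n-outcome qubit POVM is simulable by projective measurements if and only if it is a convex combination of POVMs having at most two nonzero effects. -/

import Mathlib

open scoped ComplexOrder

/-- An `n`-outcome POVM on `ℂ^d`. -/
def IsPOVM {d n : ℕ} (M : Fin n → Matrix (Fin d) (Fin d) ℂ) : Prop :=
  (∀ i, (M i).PosSemidef) ∧ ∑ i, M i = 1

/-- A projective measurement: a POVM whose effects are orthogonal projections. -/
def IsProjectivePOVM {d n : ℕ} (M : Fin n → Matrix (Fin d) (Fin d) ℂ) : Prop :=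
  IsPOVM M ∧ ∀ i, (M i).IsHermitian ∧ M i * M i = M i

/-- `n`-outcome POVMs with at most two nonzero effects (two-outcome POVMs). -/
def TwoOutcome (d n : ℕ) : Set (Fin n → Matrix (Fin d) (Fin d) ℂ) :=
  {N | IsPOVM N ∧ ∃ a b : Fin n, ∀ j, j ≠ a → j ≠ b → N j = 0}

open Matrix

/-- A Hermitian idempotent matrix is positive semidefinite. -/
lemma psd_of_proj {d : ℕ} {P : Matrix (Fin d) (Fin d) ℂ} (hH : P.IsHermitian)
    (hP : P * P = P) : P.PosSemidef := by
  have h : P = Pᴴ * P := by rw [hH.eq, hP]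
  rw [h]
  exact Matrix.posSemidef_conjTranspose_mul_self P

/-- A nonzero 2×2 Hermitian projection has real trace at least 1. -/
lemma proj_trace_lb {P : Matrix (Fin 2) (Fin 2) ℂ} (hH : P.IsHermitian)
    (hP : P * P = P) (h0 : P ≠ 0) : 1 ≤ (P 0 0).re + (P 1 1).re := by
  have h01 : (P * P) 0 1 = P 0 1 := by rw [hP]
  rw [Matrix.mul_apply, Fin.sum_univ_two] at h01
  by_cases hc : P 0 1 = 0
  · have h10 : P 1 0 = 0 := by
      have := hH.apply 1 0
      rw [← this, hc]; simp
    have h00 : (P * P) 0 0 = P 0 0 := by rw [hP]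
    have h11 : (P * P) 1 1 = P 1 1 := by rw [hP]
    rw [Matrix.mul_apply, Fin.sum_univ_two, hc, h10] at h00 h11
    simp only [mul_zero, zero_mul, add_zero, zero_add] at h00 h11
    -- h00 : P 0 0 * P 0 0 = P 0 0, h11 : P 1 1 * P 1 1 = P 1 1
    have e00 : P 0 0 = 0 ∨ P 0 0 = 1 := by
      rcases mul_eq_zero.mp (show P 0 0 * (P 0 0 - 1) = 0 by ring_nf; linear_combination h00) with h | h
      · exact Or.inl h
      · exact Or.inr (by linear_combination h)
    have e11 : P 1 1 = 0 ∨ P 1 1 = 1 := by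
      rcases mul_eq_zero.mp (show P 1 1 * (P 1 1 - 1) = 0 by ring_nf; linear_combination h11) with h | h
      · exact Or.inl h
      · exact Or.inr (by linear_combination h)
    have hne : P 0 0 ≠ 0 ∨ P 1 1 ≠ 0 := by
      by_contra hcon
      push_neg at hcon
      apply h0
      ext i j
      fin_cases i <;> fin_cases j <;> simp [hcon.1, hcon.2, hc, h10]
    rcases e00 with h | h <;> rcases e11 with h' | h' <;>
      simp [h, h'] at hne ⊢ <;> norm_num
  · have hsum : P 0 0 + P 1 1 = 1 := by
      have : (P 0 0 + P 1 1) * P 0 1 = 1 * P 0 1 := by ring_nf; linear_combination h01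
      exact mul_right_cancel₀ hc this
    have := congrArg Complex.re hsum
    simp at this
    linarith

lemma proj_mem_twoOutcome {n : ℕ} {M : Fin n → Matrix (Fin 2) (Fin 2) ℂ}
    (hM : IsProjectivePOVM M) : M ∈ TwoOutcome 2 n := by
  classical
  refine ⟨hM.1, ?_⟩
  have hne : Nonempty (Fin n) := by
    rcases Nat.eq_zero_or_pos n with rfl | hn
    · exfalso
      have h := hM.1.2
      have := congrFun (congrFun h 0) 0
      simp at this
    · exact ⟨⟨0, hn⟩⟩
  set S : Finset (Fin n) := Finset.univ.filter (fun i => M i ≠ 0) with hS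
  -- the trace function
  set f : Fin n → ℝ := fun i => (M i 0 0).re + (M i 1 1).re with hf
  have hfsum : ∑ i, f i = 2 := by
    have h := hM.1.2
    have h00 := congrFun (congrFun h 0) 0
    have h11 := congrFun (congrFun h 1) 1
    simp only [Finset.sum_apply, Matrix.sum_apply] at h00 h11
    have r00 := congrArg Complex.re h00
    have r11 := congrArg Complex.re h11
    simp [Complex.re_sum] at r00 r11
    simp [hf, Finset.sum_add_distrib]
    rw [r00, r11]; norm_num
  have hfS : ∑ i ∈ S, f i = 2 := by
    rw [← hfsum]
    apply Finset.sum_subset (Finset.subset_univ S)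
    intro j _ hj
    simp [hS] at hj
    simp [hf, hj]
  have hcard : S.card ≤ 2 := by
    by_contra hcon
    push_neg at hcon
    have hge : ∀ i ∈ S, (1:ℝ) ≤ f i := by
      intro i hi
      simp [hS] at hi
      exact proj_trace_lb (hM.2 i).1 (hM.2 i).2 hi
    have := Finset.card_nsmul_le_sum S f 1 hge
    simp at this
    rw [hfS] at this
    have : (3:ℝ) ≤ 2 := le_trans (by exact_mod_cast hcon) this
    linarith
  -- extract a, b
  obtain ⟨x⟩ := hne
  rcases S.eq_empty_or_nonempty with hSe | ⟨a, ha⟩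
  · exact ⟨x, x, fun j _ _ => by
      by_contra hj
      have : j ∈ S := by simp [hS, hj]
      simp [hSe] at this⟩
  · rcases (S.erase a).eq_empty_or_nonempty with hSe | ⟨b, hb⟩
    · refine ⟨a, a, fun j hj _ => ?_⟩
      by_contra hjz
      have hjS : j ∈ S := by simp [hS, hjz]
      have : j ∈ S.erase a := Finset.mem_erase.mpr ⟨hj, hjS⟩
      simp [hSe] at this
    · have hba : b ≠ a := (Finset.mem_erase.mp hb).1
      have hbS : b ∈ S := (Finset.mem_erase.mp hb).2
      refine ⟨a, b, fun j hja hjb => ?_⟩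
      by_contra hjz
      have hjS : j ∈ S := by simp [hS, hjz]
      have hsub : ({j, a, b} : Finset (Fin n)) ⊆ S := by
        intro y hy
        simp at hy
        rcases hy with rfl | rfl | rfl <;> assumption
      have hc3 : ({j, a, b} : Finset (Fin n)).card = 3 := by
        rw [Finset.card_insert_of_notMem (by simp [hja, hjb]),
            Finset.card_insert_of_notMem (by simp [Ne.symm hba])]
        simp
      have := Finset.card_le_card hsub
      omega

/-- A pair of complementary projections placed at distinct outcomes forms a projective POVM. -/
lemma pair_projective {n : ℕ} {a b : Fin n} (hab : a ≠ b)
    {A B : Matrix (Fin 2) (Fin 2) ℂ} (hAh : A.IsHermitian) (hAi : A * A = A)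
    (hBh : B.IsHermitian) (hBi : B * B = B) (hsum : A + B = 1) :
    IsProjectivePOVM (fun j => if j = a then A else if j = b then B else 0) := by
  classical
  constructor
  · constructor
    · intro i
      by_cases hia : i = a
      · simpa [hia] using psd_of_proj hAh hAi
      · by_cases hib : i = b
        · simpa [hib, Ne.symm hab] using psd_of_proj hBh hBi
        · simp [hia, hib, Matrix.PosSemidef.zero]
    · have h1 : ∑ i, (fun j => if j = a then A else if j = b then B else 0) i
          = ∑ i ∈ ({a, b} : Finset (Fin n)), (if i = a then A else if i = b then B else 0) := by
        symm
        apply Finset.sum_subset (Finset.subset_univ _)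
        intro j _ hj
        simp at hj
        simp [hj.1, hj.2]
      rw [h1, Finset.sum_pair hab]
      simp [hab, Ne.symm hab, hsum]
  · intro i
    by_cases hia : i = a
    · simpa [hia] using ⟨hAh, hAi⟩
    · by_cases hib : i = b
      · simpa [hib, Ne.symm hab] using (⟨hBh, hBi⟩ : B.IsHermitian ∧ B * B = B)
      · simp [hia, hib]

lemma twoOutcome_subset_convexHull (n : ℕ) :
    TwoOutcome 2 n ⊆ convexHull ℝ {P : Fin n → Matrix (Fin 2) (Fin 2) ℂ | IsProjectivePOVM P} := by
  classical
  rintro N ⟨hN, a, b, hz⟩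
  by_cases hab : a = b
  · subst hab
    apply subset_convexHull
    have hNa : N a = 1 := by
      have h := hN.2
      rw [Fintype.sum_eq_single a (fun j hj => hz j hj hj)] at h
      exact h
    refine ⟨hN, fun i => ?_⟩
    by_cases hia : i = a
    · subst hia; rw [hNa]; exact ⟨Matrix.isHermitian_one, one_mul 1⟩
    · rw [hz i hia hia]; exact ⟨Matrix.isHermitian_zero, by simp⟩
  · have hsum : N a + N b = 1 := by
      have h := hN.2
      rw [show ∑ i, N i = ∑ i ∈ ({a, b} : Finset (Fin n)), N i by
        symm
        apply Finset.sum_subset (Finset.subset_univ _)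
        intro j _ hj
        simp at hj
        exact hz j hj.1 hj.2] at h
      rwa [Finset.sum_pair hab] at h
    have hA : (N a).IsHermitian := (hN.1 a).1
    set U : Matrix (Fin 2) (Fin 2) ℂ := (hA.eigenvectorUnitary : Matrix (Fin 2) (Fin 2) ℂ) with hU
    set lam : Fin 2 → ℝ := hA.eigenvalues with hlam
    set D : Fin 2 → Matrix (Fin 2) (Fin 2) ℂ :=
      fun k => Matrix.diagonal (fun i => if i = k then 1 else 0) with hD
    set Q : Fin 2 → Matrix (Fin 2) (Fin 2) ℂ := fun k => U * D k * star U with hQ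
    have hUU : U * star U = 1 := Matrix.mem_unitaryGroup_iff.mp hA.eigenvectorUnitary.2
    have hUU' : star U * U = 1 := Matrix.mem_unitaryGroup_iff'.mp hA.eigenvectorUnitary.2
    have hDH : ∀ k, (D k)ᴴ = D k := by
      intro k
      simp only [hD, Matrix.diagonal_conjTranspose]
      refine congrArg Matrix.diagonal ?_
      funext i
      by_cases h : i = k <;> simp [h]
    have hDidem : ∀ k, D k * D k = D k := by
      intro k
      simp only [hD, Matrix.diagonal_mul_diagonal]
      refine congrArg Matrix.diagonal ?_
      funext i
      by_cases h : i = k <;> simp [h]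
    have hD01 : D 0 + D 1 = 1 := by
      simp only [hD]
      rw [Matrix.diagonal_add, ← Matrix.diagonal_one]
      refine congrArg Matrix.diagonal ?_
      funext i
      fin_cases i <;> norm_num
    have hQherm : ∀ k, (Q k).IsHermitian := by
      intro k
      simp only [hQ, Matrix.IsHermitian, Matrix.star_eq_conjTranspose,
        Matrix.conjTranspose_mul, Matrix.conjTranspose_conjTranspose, hDH k, Matrix.mul_assoc]
    have hQidem : ∀ k, Q k * Q k = Q k := by
      intro k
      simp only [hQ, Matrix.mul_assoc]
      rw [show star U * (U * (D k * star U)) = (star U * U) * (D k * star U) by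
        simp only [Matrix.mul_assoc], hUU', one_mul, ← Matrix.mul_assoc (D k), hDidem k]
    have hQsum : Q 0 + Q 1 = 1 := by
      have h : Q 0 + Q 1 = U * (D 0 + D 1) * star U := by
        simp only [hQ, Matrix.mul_add, Matrix.add_mul]
      rw [h, hD01, mul_one, hUU]
    have hspec : N a = lam 0 • Q 0 + lam 1 • Q 1 := by
      have h := hA.spectral_theorem
      have hdiag : Matrix.diagonal ((RCLike.ofReal ∘ hA.eigenvalues) : Fin 2 → ℂ)
          = lam 0 • D 0 + lam 1 • D 1 := by
        ext i j
        simp only [hD, hlam, Matrix.add_apply, Matrix.smul_apply, Matrix.diagonal_apply,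
          Function.comp_apply]
        fin_cases i <;> fin_cases j <;>
          simp [Complex.real_smul]
      rw [hdiag, Unitary.conjStarAlgAut_apply] at h
      rw [hQ]
      simp only [Matrix.mul_add, Matrix.add_mul, Matrix.mul_smul, Matrix.smul_mul] at h ⊢
      exact h
    have hNb : N b = 1 - N a := eq_sub_of_add_eq' hsum
    have hlam0 : ∀ k, 0 ≤ lam k := fun k => (hN.1 a).eigenvalues_nonneg k
    have hlam1 : ∀ k, lam k ≤ 1 := by
      intro k
      have hdiagNa : star U * N a * U = Matrix.diagonal (RCLike.ofReal ∘ hA.eigenvalues) :=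
        by have := hA.conjStarAlgAut_star_eigenvectorUnitary; rwa [Unitary.conjStarAlgAut_star_apply] at this
      have hpsd : (star U * N b * U).PosSemidef := by
        have h := (hN.1 b).mul_mul_conjTranspose_same (star U)
        rwa [Matrix.star_eq_conjTranspose, Matrix.conjTranspose_conjTranspose] at h
      have hdiagNb : star U * N b * U
          = Matrix.diagonal (fun i => 1 - (RCLike.ofReal ∘ hA.eigenvalues) i) := by
        rw [hNb, Matrix.mul_sub, Matrix.sub_mul, mul_one, hUU', hdiagNa]
        ext i j
        by_cases h : i = j <;>
          simp [Matrix.diagonal_apply, h, Matrix.one_apply]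
      rw [hdiagNb] at hpsd
      have := Matrix.posSemidef_diagonal_iff.mp hpsd k
      have h2 : (0 : ℂ) ≤ ((1 - lam k : ℝ) : ℂ) := by
        convert this using 1
        push_cast
        simp [hlam]
      rw [Complex.zero_le_real] at h2
      linarith
    set W : Fin 4 → ℝ :=
      ![lam 0 * (1 - lam 1), lam 1 * (1 - lam 0), lam 0 * lam 1, (1 - lam 0) * (1 - lam 1)]
      with hW
    set F : Fin 4 → (Fin n → Matrix (Fin 2) (Fin 2) ℂ) :=
      ![fun j => if j = a then Q 0 else if j = b then Q 1 else 0,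
        fun j => if j = a then Q 1 else if j = b then Q 0 else 0,
        fun j => if j = a then 1 else if j = b then 0 else 0,
        fun j => if j = a then 0 else if j = b then 1 else 0] with hF
    have hFproj : ∀ k : Fin 4, IsProjectivePOVM (F k) := by
      intro k
      fin_cases k <;> simp only [hF, Matrix.cons_val_zero, Matrix.cons_val_one,
        Matrix.head_cons, Matrix.cons_val_two, Matrix.tail_cons, Matrix.cons_val_three]
      · exact pair_projective hab (hQherm 0) (hQidem 0) (hQherm 1) (hQidem 1) hQsum
      · exact pair_projective hab (hQherm 1) (hQidem 1) (hQherm 0) (hQidem 0)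
          (by rw [add_comm]; exact hQsum)
      · exact pair_projective hab Matrix.isHermitian_one (one_mul 1)
          Matrix.isHermitian_zero (by simp) (by simp)
      · exact pair_projective hab Matrix.isHermitian_zero (by simp)
          Matrix.isHermitian_one (one_mul 1) (by simp)
    have hcomb : N = ∑ k, W k • F k := by
      funext j
      rw [Fin.sum_univ_four]
      simp only [hW, hF, Matrix.cons_val_zero, Matrix.cons_val_one, Matrix.head_cons,
        Matrix.cons_val_two, Matrix.tail_cons, Matrix.cons_val_three,
        Pi.add_apply, Pi.smul_apply]
      by_cases hja : j = a
      · subst hja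
        simp only [eq_self_iff_true, if_true]
        rw [hspec, ← hQsum]
        module
      · by_cases hjb : j = b
        · subst hjb
          simp only [if_neg hja, eq_self_iff_true, if_true]
          rw [hNb, hspec, ← hQsum]
          module
        · rw [hz j hja hjb]
          simp [hja, hjb]
    rw [hcomb]
    apply Convex.sum_mem (convex_convexHull ℝ _)
    · intro k _
      fin_cases k <;> simp only [hW, Matrix.cons_val_zero, Matrix.cons_val_one, Matrix.head_cons,
        Matrix.cons_val_two, Matrix.tail_cons, Matrix.cons_val_three] <;>
        exact mul_nonneg (by linarith [hlam0 0, hlam0 1, hlam1 0, hlam1 1])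
          (by linarith [hlam0 0, hlam0 1, hlam1 0, hlam1 1])
    · rw [Fin.sum_univ_four]
      simp only [hW, Matrix.cons_val_zero, Matrix.cons_val_one, Matrix.head_cons,
        Matrix.cons_val_two, Matrix.tail_cons, Matrix.cons_val_three]
      ring
    · intro k _
      exact subset_convexHull ℝ _ (hFproj k)

/-- For qubits, the set of PM-simulable measurements coincides with the convex
hull of two-outcome measurements: `SP(2,n) = conv(P(2,n;2))`. -/
theorem qubit_SP_eq_convexHull_twoOutcome (n : ℕ) :
    convexHull ℝ {P : Fin n → Matrix (Fin 2) (Fin 2) ℂ | IsProjectivePOVM P} =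
      convexHull ℝ (TwoOutcome 2 n) := by
  apply le_antisymm
  · exact convexHull_mono (fun M hM => proj_mem_twoOutcome hM)
  · exact convexHull_min (twoOutcome_subset_convexHull n) (convex_convexHull ℝ _)
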